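/- Triple quad formula (green): for points A1, A2, A3 in the plane over a field of characteristic not 2, if the three points are collinear then (Q1+Q2+Q3)² = 2(Q1²+Q2²+Q3²), where Qi are the green quadrances Q1 = Q_g(A2,A3), Q2 = Q_g(A1,A3), Q3 = Q_g(A1,A2). -/
import Mathlib

/-- Green quadrance between two points. -/
def Qg {F : Type*} [Field F] (X Y : F × F) : F :=
  2 * (Y.1 - X.1) * (Y.2 - X.2)

/-- Three points are collinear when the vectors `A2 - A1` and `A3 - A1`
are linearly dependent. -/
def Collinear3 {F : Type*} [Field F] (A1 A2 A3 : F × F) : Prop :=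
  ∃ s t : F, (s, t) ≠ (0, 0) ∧
    s • (A2.1 - A1.1, A2.2 - A1.2) + t • (A3.1 - A1.1, A3.2 - A1.2) = (0, 0)

/-- Triple quad formula (green): collinearity implies
`(Q1+Q2+Q3)² = 2(Q1²+Q2²+Q3²)` for green quadrances. -/
theorem green_triple_quad {F : Type*} [Field F] (hchar : (2 : F) ≠ 0)
    (A1 A2 A3 : F × F) (h : Collinear3 A1 A2 A3) :
    (Qg A2 A3 + Qg A1 A3 + Qg A1 A2) ^ 2
      = 2 * ((Qg A2 A3) ^ 2 + (Qg A1 A3) ^ 2 + (Qg A1 A2) ^ 2) := by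
  obtain ⟨s, t, hst, heq⟩ := h
  set a := A2.1 - A1.1
  set b := A2.2 - A1.2
  set c := A3.1 - A1.1
  set d := A3.2 - A1.2
  have h1 : s * a + t * c = 0 := congrArg Prod.fst heq
  have h2 : s * b + t * d = 0 := congrArg Prod.snd heq
  have hcross : a * d - c * b = 0 := by
    rcases (by
      by_contra hc
      push_neg at hc
      exact hst (Prod.ext hc.1 hc.2) : s ≠ 0 ∨ t ≠ 0) with hs | ht
    · have : s * (a * d - c * b) = 0 := by linear_combination d * h1 - c * h2
      rcases mul_eq_zero.mp this with h | h
      · exact absurd h hs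
      · exact h
    · have : t * (a * d - c * b) = 0 := by linear_combination a * h2 - b * h1
      rcases mul_eq_zero.mp this with h | h
      · exact absurd h ht
      · exact h
  show (2 * (A3.1 - A2.1) * (A3.2 - A2.2) + 2 * c * d + 2 * a * b) ^ 2
      = 2 * ((2 * (A3.1 - A2.1) * (A3.2 - A2.2)) ^ 2 + (2 * c * d) ^ 2 + (2 * a * b) ^ 2)
  have e1 : A3.1 - A2.1 = c - a := by simp [a, c]
  have e2 : A3.2 - A2.2 = d - b := by simp [b, d]
  rw [e1, e2]
  linear_combination (-4 * (a * d - c * b)) * hcross
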